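/- Any two rational normal curves in ℙ^{r−1} that share r+2 points in general linear position are equal (Castelnuovo uniqueness consequence): if X and X' are rational normal curves of degree r−1 in ℙ^{r−1} containing a common set of r+2 points, any r of which are linearly independent, then X = X'. -/

import Mathlib

open scoped LinearAlgebra.Projectivization

/-- The standard rational normal curve in `ℙ^{r-1}`: the image of `ℙ¹` under
`[s : t] ↦ [s^{r-1} : s^{r-2}t : ⋯ : t^{r-1}]`. -/
def stdRNC (k : Type*) [Field k] (r : ℕ) : Set (ℙ k (Fin r → k)) :=
  {P | ∃ (s t : k) (h : (fun a : Fin r => s ^ (r - 1 - (a : ℕ)) * t ^ (a : ℕ)) ≠ 0),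
    P = Projectivization.mk k _ h}

/-- A rational normal curve in `ℙ^{r-1}`: a subset projectively equivalent to the
standard rational normal curve. -/
def IsRNC (k : Type*) [Field k] (r : ℕ) (C : Set (ℙ k (Fin r → k))) : Prop :=
  ∃ g : (Fin r → k) ≃ₗ[k] (Fin r → k),
    C = (Projectivization.map (g : (Fin r → k) →ₗ[k] (Fin r → k)) g.injective) '' stdRNC k r


section AuxRNC

open Polynomial Finset

variable {k : Type*} [Field k]


/-- bracket of two vectors in k² -/
def Br (u v : k × k) : k := u.1 * v.2 - u.2 * v.1

lemma Br_def (u v : k × k) : Br u v = u.1 * v.2 - u.2 * v.1 := rfl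

lemma Br_smul_left (c : k) (u v : k × k) : Br (c • u) v = c * Br u v := by
  simp [Br, Prod.smul_def]; ring

lemma Br_self (u : k × k) : Br u u = 0 := by simp [Br, mul_comm]

lemma exists_smul_of_br_eq_zero {u v : k × k} (hu : u ≠ 0) (hv : v ≠ 0)
    (h : Br u v = 0) : ∃ d : k, d ≠ 0 ∧ u = d • v := by
  rw [Br_def] at h
  rcases eq_or_ne v.1 0 with h1 | h1
  · -- v = (0, v.2), v.2 ≠ 0
    have hv2 : v.2 ≠ 0 := by
      intro h2; exact hv (Prod.ext h1 h2)
    have hu1 : u.1 = 0 := by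
      have : u.1 * v.2 = 0 := by rw [h1] at h; linear_combination h
      exact (mul_eq_zero.mp this).resolve_right hv2
    refine ⟨u.2 / v.2, ?_, ?_⟩
    · intro h2
      exact hu (Prod.ext hu1 (by field_simp at h2; simpa using h2))
    · apply Prod.ext <;> simp [hu1, h1] <;> field_simp
  · refine ⟨u.1 / v.1, ?_, ?_⟩
    · intro h2
      have hu1 : u.1 = 0 := by field_simp at h2; simpa using h2
      have hu2 : u.2 = 0 := by
        have : u.2 * v.1 = 0 := by rw [hu1] at h; linear_combination -h
        exact (mul_eq_zero.mp this).resolve_right h1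
      exact hu (Prod.ext hu1 hu2)
    · apply Prod.ext
      · simp; field_simp
      · simp only [Prod.smul_snd, smul_eq_mul]
        field_simp
        linear_combination -h

/-- the Veronese vector -/
def Vv (r : ℕ) (s t : k) : Fin r → k := fun a => s ^ (r - 1 - (a : ℕ)) * t ^ (a : ℕ)

lemma Vv_smul (r : ℕ) (c s t : k) : Vv r (c * s) (c * t) = c ^ (r - 1) • Vv r s t := by
  funext a
  have ha : (r - 1 - (a : ℕ)) + (a : ℕ) = r - 1 := by omega
  simp only [Vv, Pi.smul_apply, smul_eq_mul, mul_pow]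
  rw [show r - 1 = (r - 1 - (a : ℕ)) + (a : ℕ) from ha.symm, pow_add]
  simp only [Nat.add_sub_cancel]
  ring

lemma Vv_zero (r : ℕ) (hr : 2 ≤ r) : Vv (k := k) r 0 0 = 0 := by
  funext a
  rcases eq_or_ne (a : ℕ) 0 with h | h
  · simp [Vv, h, zero_pow (by omega : r - 1 ≠ 0)]
  · simp [Vv, zero_pow h]

lemma Vv_ne_zero (r : ℕ) (hr : 2 ≤ r) {s t : k} (h : ¬(s = 0 ∧ t = 0)) :
    Vv r s t ≠ 0 := by
  intro h0
  have h1 := congrFun h0 ⟨0, by omega⟩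
  have h2 := congrFun h0 ⟨r - 1, by omega⟩
  simp only [Vv, Fin.val_mk, Nat.sub_self, pow_zero, mul_one, one_mul, Nat.sub_zero,
    Pi.zero_apply] at h1 h2
  exact h ⟨pow_eq_zero_iff (by omega : r - 1 ≠ 0) |>.mp (by simpa using h1),
    pow_eq_zero_iff (by omega : r - 1 ≠ 0) |>.mp (by simpa using h2)⟩

/-- coefficients of the expansion of (a s + b t)^N (c s + d t)^M -/
noncomputable def sCoef (a b c d : k) (N M : ℕ) : ℕ → k :=
  fun m => (((C a + C b * X) ^ N * (C c + C d * X) ^ M : k[X])).coeff m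

lemma linpoly_natDegree_le (a b : k) : (C a + C b * X).natDegree ≤ 1 :=
  (natDegree_add_le _ _).trans (by
    simp only [natDegree_C, max_le_iff]
    exact ⟨Nat.zero_le _, (natDegree_C_mul_le _ _).trans (by simp)⟩)

lemma linpoly_pow_natDegree_le (a b : k) (N : ℕ) : ((C a + C b * X) ^ N).natDegree ≤ N :=
  natDegree_pow_le.trans (by
    calc _ ≤ N * 1 := Nat.mul_le_mul_left _ (linpoly_natDegree_le _ _)
    _ = N := by ring)

lemma coeff_top_pow (a b : k) (N : ℕ) : ((C a + C b * X) ^ N).coeff N = b ^ N := by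
  rcases eq_or_ne b 0 with hb | hb
  · subst hb
    rcases Nat.eq_zero_or_pos N with hN | hN
    · subst hN; simp
    · simp only [map_zero, zero_mul, add_zero, ← map_pow, coeff_C,
        Nat.pos_iff_ne_zero.mp hN, if_false, zero_pow (Nat.pos_iff_ne_zero.mp hN)]
  · have key : C a + C b * X = C b * (X + C (a / b)) := by
      rw [mul_add, ← C_mul, mul_div_cancel₀ _ hb, mul_comm, add_comm]
    rw [key, mul_pow, ← C_pow, coeff_C_mul]
    have hm : ((X + C (a / b)) ^ N).Monic := (monic_X_add_C _).pow N
    have hd : ((X + C (a / b)) ^ N).natDegree = N := by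
      simp [natDegree_pow, natDegree_X_add_C]
    have := hm.coeff_natDegree
    rw [hd] at this
    rw [this, mul_one]

lemma coeff_top_mul (a b c d : k) (N M : ℕ) :
    (((C a + C b * X) ^ N * (C c + C d * X) ^ M : k[X])).coeff (N + M) = b ^ N * d ^ M := by
  rw [coeff_mul]
  rw [Finset.sum_eq_single ((N : ℕ), (M : ℕ))]
  · rw [coeff_top_pow, coeff_top_pow]
  · rintro ⟨i, j⟩ hij hne
    rw [Finset.HasAntidiagonal.mem_antidiagonal] at hij
    rcases Nat.lt_or_ge N i with hi | hi
    · rw [coeff_eq_zero_of_natDegree_lt (lt_of_le_of_lt (linpoly_pow_natDegree_le a b N) hi),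
        zero_mul]
    · have hj : M < j := by
        rcases Nat.lt_or_ge M j with h | h
        · exact h
        · exfalso; apply hne
          have : i = N ∧ j = M := by omega
          simp [this.1, this.2]
      rw [coeff_eq_zero_of_natDegree_lt (lt_of_le_of_lt (linpoly_pow_natDegree_le c d M) hj),
        mul_zero]
  · intro h
    simp at h

lemma sCoef_spec (a b c d : k) (N M : ℕ) (s t : k) :
    (a * s + b * t) ^ N * (c * s + d * t) ^ M
      = ∑ m ∈ range (N + M + 1), sCoef a b c d N M m * (s ^ (N + M - m) * t ^ m) := by
  rcases eq_or_ne s 0 with hs | hs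
  · subst hs
    rw [Finset.sum_eq_single (N + M)]
    · simp only [sCoef, Nat.sub_self, pow_zero, one_mul, mul_zero, zero_add]
      rw [coeff_top_mul, mul_pow, mul_pow, pow_add]
      ring
    · intro m hm hne
      have : N + M - m ≠ 0 := by
        simp only [mem_range] at hm; omega
      simp [zero_pow this]
    · intro h; exact absurd (self_mem_range_succ _) h
  · have hdeg : (((C a + C b * X) ^ N * (C c + C d * X) ^ M : k[X])).natDegree < N + M + 1 :=
      Nat.lt_succ_of_le ((natDegree_mul_le).trans
        (add_le_add (linpoly_pow_natDegree_le a b N) (linpoly_pow_natDegree_le c d M)))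
    have heval := Polynomial.eval_eq_sum_range' hdeg (t / s)
    have heval2 : eval (t / s) (((C a + C b * X) ^ N * (C c + C d * X) ^ M : k[X]))
        = (a + b * (t / s)) ^ N * (c + d * (t / s)) ^ M := by
      simp [eval_mul, eval_pow, eval_add, eval_C, eval_X]
    have key : (a * s + b * t) ^ N * (c * s + d * t) ^ M
        = s ^ (N + M) * ((a + b * (t / s)) ^ N * (c + d * (t / s)) ^ M) := by
      rw [pow_add, mul_mul_mul_comm, ← mul_pow, ← mul_pow]
      field_simp
    rw [key, ← heval2, heval, Finset.mul_sum]
    refine Finset.sum_congr rfl fun m hm => ?_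
    simp only [mem_range] at hm
    have hsplit : s ^ (N + M) = s ^ (N + M - m) * s ^ m := by
      rw [← pow_add]; congr 1; omega
    rw [sCoef, hsplit, div_pow]
    field_simp

/-- matrix of the Veronese symmetric power of a 2x2 matrix [[a,b],[c,d]] -/
noncomputable def Smat (r : ℕ) (a b c d : k) : Matrix (Fin r) (Fin r) k :=
  fun i m => sCoef a b c d (r - 1 - (i : ℕ)) (i : ℕ) (m : ℕ)

lemma Smat_mulVec (r : ℕ) (hr : 1 ≤ r) (a b c d s t : k) :
    (Smat r a b c d).mulVec (Vv r s t) = Vv r (a * s + b * t) (c * s + d * t) := by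
  funext i
  have hi : (r - 1 - (i : ℕ)) + (i : ℕ) = r - 1 := by omega
  have spec := sCoef_spec a b c d (r - 1 - (i : ℕ)) (i : ℕ) s t
  rw [hi] at spec
  have hr1 : r - 1 + 1 = r := by omega
  rw [hr1] at spec
  simp only [Matrix.mulVec, dotProduct, Smat, Vv]
  rw [Finset.sum_range] at spec
  exact spec.symm

lemma vv_li (r : ℕ) (l : Fin r → k) (hl : Function.Injective l) :
    LinearIndependent k (fun i => Vv r 1 (l i)) := by
  have hv : (fun i => Vv r 1 (l i)) = fun i => (Matrix.vandermonde l) i := by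
    funext i m
    simp [Vv, Matrix.vandermonde, one_pow]
  rw [hv]
  change LinearIndependent k (Matrix.vandermonde l).row
  rw [Matrix.linearIndependent_rows_iff_isUnit, Matrix.isUnit_iff_isUnit_det,
    Matrix.det_vandermonde, isUnit_iff_ne_zero]
  rw [Finset.prod_ne_zero_iff]
  intro i _
  rw [Finset.prod_ne_zero_iff]
  intro j hj
  rw [sub_ne_zero]
  exact fun h => (Finset.mem_Ioi.mp hj).ne' (hl h)

lemma ext_on_vv {r : ℕ} (hr : 1 ≤ r) {l : Fin r → k} (hl : Function.Injective l)
    {F G : (Fin r → k) →ₗ[k] (Fin r → k)}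
    (h : ∀ i, F (Vv r 1 (l i)) = G (Vv r 1 (l i))) : F = G := by
  haveI : Nonempty (Fin r) := ⟨⟨0, by omega⟩⟩
  refine Module.Basis.ext (basisOfLinearIndependentOfCardEqFinrank (vv_li r l hl)
    (by simp [Module.finrank_fin_fun])) fun i => ?_
  rw [coe_basisOfLinearIndependentOfCardEqFinrank]
  exact h i

section Lag

variable {r : ℕ}

/-- coordinates of e₀ in the Vandermonde basis -/
noncomputable def lagA (l : Fin r → k) (i : Fin r) : k :=
  eval 0 (Lagrange.basis Finset.univ l i)

/-- coordinates of e_{r-1} in the Vandermonde basis -/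
noncomputable def lagB (l : Fin r → k) (i : Fin r) : k :=
  (Lagrange.basis Finset.univ l i).coeff (r - 1)

lemma lag_expand (l : Fin r → k) (hl : Function.Injective l) (m : Fin r) :
    (X : k[X]) ^ (m : ℕ) = ∑ i, C (l i ^ (m : ℕ)) * Lagrange.basis Finset.univ l i := by
  have hdeg : ((X : k[X]) ^ (m : ℕ)).degree < (Finset.univ : Finset (Fin r)).card := by
    rw [degree_X_pow, Finset.card_univ, Fintype.card_fin]
    exact_mod_cast m.isLt
  have h := Lagrange.eq_interpolate (v := l) (f := (X : k[X]) ^ (m : ℕ)) hl.injOn hdeg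
  rw [Lagrange.interpolate_apply] at h
  simp only [eval_pow, eval_X] at h
  exact h

lemma factA (l : Fin r → k) (hl : Function.Injective l) (m : Fin r) :
    ∑ i, lagA l i * l i ^ (m : ℕ) = (0 : k) ^ (m : ℕ) := by
  have h := congrArg (eval 0) (lag_expand l hl m)
  rw [eval_pow, eval_X, eval_finset_sum] at h
  simp only [eval_mul, eval_C] at h
  rw [h]
  exact Finset.sum_congr rfl fun i _ => mul_comm _ _

lemma factB (hr : 1 ≤ r) (l : Fin r → k) (hl : Function.Injective l) (m : Fin r) :
    ∑ i, lagB l i * l i ^ (m : ℕ) = (0 : k) ^ (r - 1 - (m : ℕ)) := by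
  have h := congrArg (fun p : k[X] => p.coeff (r - 1)) (lag_expand l hl m)
  simp only [coeff_X_pow, finset_sum_coeff, coeff_C_mul] at h
  have h2 : (0 : k) ^ (r - 1 - (m : ℕ)) = if r - 1 = (m : ℕ) then 1 else 0 := by
    rw [zero_pow_eq]
    congr 1
    have := m.isLt
    simp only [eq_iff_iff]
    omega
  rw [h2, h]
  exact Finset.sum_congr rfl fun i _ => mul_comm _ _

lemma lagB_eq (l : Fin r → k) (hl : Function.Injective l) (i : Fin r) :
    lagB l i = ∏ j ∈ Finset.univ.erase i, (l i - l j)⁻¹ := by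
  rw [lagB, Lagrange.basis]
  have : ∀ j ∈ Finset.univ.erase i, Lagrange.basisDivisor (l i) (l j)
      = C (l i - l j)⁻¹ * (X - C (l j)) := fun _ _ => rfl
  rw [Finset.prod_congr rfl this, Finset.prod_mul_distrib]
  rw [show (∏ x ∈ Finset.univ.erase i, C (l i - l x)⁻¹) = C (∏ x ∈ Finset.univ.erase i, (l i - l x)⁻¹) from (map_prod (C : k →+* k[X]) _ _).symm, coeff_C_mul]
  have hmono : (∏ j ∈ Finset.univ.erase i, (X - C (l j))).Monic :=
    monic_prod_of_monic _ _ fun j _ => monic_X_sub_C _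
  have hdeg : (∏ j ∈ Finset.univ.erase i, (X - C (l j))).natDegree = r - 1 := by
    rw [natDegree_prod _ _ fun j _ => X_sub_C_ne_zero _]
    simp [natDegree_X_sub_C, Finset.card_erase_of_mem]
  rw [← hdeg, hmono.coeff_natDegree, mul_one]

lemma lagA_eq (l : Fin r → k) (hl : Function.Injective l) (i : Fin r) :
    lagA l i = (∏ j ∈ Finset.univ.erase i, -l j) * lagB l i := by
  rw [lagA, Lagrange.basis, eval_prod, lagB_eq l hl, ← Finset.prod_mul_distrib]
  refine Finset.prod_congr rfl fun j _ => ?_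
  simp only [Lagrange.basisDivisor, eval_mul, eval_C, eval_sub, eval_X]
  ring

end Lag


/-- diagonal symmetric power map -/
def diagPow (r : ℕ) (alpha : k) : (Fin r → k) →ₗ[k] (Fin r → k) where
  toFun x := fun j => alpha ^ (j : ℕ) * x j
  map_add' x y := by funext j; simp [mul_add]
  map_smul' c x := by funext j; simp only [Pi.smul_apply, smul_eq_mul, RingHom.id_apply]; ring

lemma diagPow_Vv (r : ℕ) (alpha s t : k) :
    diagPow r alpha (Vv r s t) = Vv r s (alpha * t) := by
  funext j
  simp only [diagPow, LinearMap.coe_mk, AddHom.coe_mk, Vv, mul_pow]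
  ring

lemma Br_zero_right (u : k × k) : Br u 0 = 0 := by simp [Br_def]

lemma Br_add_smul_left (a b x : k × k) (c : k) :
    Br (a + c • b) x = Br a x + c * Br b x := by
  simp [Br_def, Prod.smul_def, Prod.fst_add, Prod.snd_add]; ring

lemma Br_smul_smul (a b : k × k) (c d : k) :
    Br (c • a) (d • b) = c * d * Br a b := by
  simp [Br_def, Prod.smul_def]; ring

set_option maxHeartbeats 1600000 in
lemma core {r : ℕ} [Infinite k] (hr : 2 ≤ r)
    (h : (Fin r → k) →ₗ[k] (Fin r → k)) (z w : Fin (r + 2) → k × k)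
    (hz : ∀ i j, i ≠ j → Br (z i) (z j) ≠ 0)
    (hw : ∀ i j, i ≠ j → Br (w i) (w j) ≠ 0)
    (hc : ∀ i, ∃ c : k, c ≠ 0 ∧
      h (Vv r (z i).1 (z i).2) = c • Vv r (w i).1 (w i).2) :
    ∀ s t : k, ¬(s = 0 ∧ t = 0) →
      ∃ (pq : k × k) (c : k), pq ≠ 0 ∧ c ≠ 0 ∧
        h (Vv r s t) = c • Vv r pq.1 pq.2 := by
  classical
  choose c hc0 hceq using hc
  have hr1 : 1 ≤ r := by omega
  -- special indices
  set ι : Fin r → Fin (r + 2) := fun i => ⟨i, by omega⟩ with hι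
  set iu : Fin (r + 2) := ⟨r, by omega⟩ with hiu
  set iv : Fin (r + 2) := ⟨r + 1, by omega⟩ with hiv
  have hιu : ∀ i, ι i ≠ iu := fun i => Fin.ne_of_val_ne (by simp [hι, hiu]; omega)
  have hιv : ∀ i, ι i ≠ iv := fun i => Fin.ne_of_val_ne (by simp [hι, hiv]; omega)
  have huv : iu ≠ iv := Fin.ne_of_val_ne (by simp [hiu, hiv])
  have hιinj : Function.Injective ι := fun i j hij => by
    have := congrArg Fin.val hij
    simp only [hι] at this
    exact Fin.val_injective this
  set u : k × k := z iu with hu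
  set v : k × k := z iv with hv
  set uw : k × k := w iu with huw
  set vw : k × k := w iv with hvw
  -- the lambda parameters
  set lam : Fin r → k := fun i => -Br u (z (ι i)) / Br v (z (ι i)) with hlam
  have hlam0 : ∀ i, lam i ≠ 0 := by
    intro i
    have h1 : Br u (z (ι i)) ≠ 0 := hz iu (ι i) (Ne.symm (hιu i))
    have h2 : Br v (z (ι i)) ≠ 0 := hz iv (ι i) (Ne.symm (hιv i))
    simp only [hlam, neg_div, ne_eq, neg_eq_zero, _root_.div_eq_zero_iff, not_or]
    exact ⟨h1, h2⟩
  -- u + lam i • v = d i • z (ι i)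
  have hd : ∀ i : Fin r, ∃ d : k, d ≠ 0 ∧ u + lam i • v = d • z (ι i) := by
    intro i
    have h2 : Br v (z (ι i)) ≠ 0 := hz iv (ι i) (Ne.symm (hιv i))
    have hbr : Br (u + lam i • v) (z (ι i)) = 0 := by
      rw [Br_add_smul_left, hlam]
      field_simp
      ring
    have hne : u + lam i • v ≠ 0 := by
      intro h0
      have h3 : Br u v = 0 := by
        have h5 := Br_add_smul_left u v v (lam i)
        rw [h0, Br_self, mul_zero, add_zero] at h5
        rw [← h5]
        simp [Br_def]
      exact hz iu iv huv h3
    have hzi : z (ι i) ≠ 0 := by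
      intro h0
      exact hz iv (ι i) (Ne.symm (hιv i)) (by rw [h0, Br_zero_right])
    exact exists_smul_of_br_eq_zero hne hzi hbr
  choose d hd0 hdeq using hd
  -- injectivity of lam
  have hlaminj : Function.Injective lam := by
    intro i j hij
    by_contra hne
    have h1 : d i • z (ι i) = d j • z (ι j) := by rw [← hdeq, ← hdeq, hij]
    have h2 : Br (d i • z (ι i)) (d j • z (ι j)) = 0 := by rw [h1]; exact Br_self _
    rw [Br_smul_smul] at h2
    have h4 : d i * d j ≠ 0 := mul_ne_zero (hd0 i) (hd0 j)
    have h5 : Br (z (ι i)) (z (ι j)) = 0 := by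
      rcases mul_eq_zero.mp h2 with h3 | h3
      · exact absurd h3 h4
      · exact h3
    exact hz (ι i) (ι j) (fun hh => hne (hιinj hh)) h5
  -- w-side parameters
  set ee : Fin r → k := fun i => -Br vw (w (ι i)) with hee
  set gg : Fin r → k := fun i => Br uw (w (ι i)) with hgg
  have hee0 : ∀ i, ee i ≠ 0 := fun i =>
    neg_ne_zero.mpr (hw iv (ι i) (Ne.symm (hιv i)))
  have hgg0 : ∀ i, gg i ≠ 0 := fun i => hw iu (ι i) (Ne.symm (hιu i))
  set mu : Fin r → k := fun i => gg i / ee i with hmu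
  have hmu0 : ∀ i, mu i ≠ 0 := fun i => div_ne_zero (hgg0 i) (hee0 i)
  have hggmu : ∀ i, gg i = ee i * mu i := by
    intro i
    show gg i = ee i * (gg i / ee i)
    rw [mul_comm, div_mul_cancel₀ _ (hee0 i)]
  have pluecker : ∀ a b x y : k × k,
      (-Br b x) * Br a y - Br a x * (-Br b y) = Br a b * Br x y := by
    intro a b x y
    simp only [Br_def]
    ring
  have hmuinj : Function.Injective mu := by
    intro i j hij
    by_contra hne
    have h1 : gg i * ee j = gg j * ee i := by
      have := (div_eq_div_iff (hee0 i) (hee0 j)).mp hij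
      linear_combination this
    have h2 := pluecker uw vw (w (ι i)) (w (ι j))
    have h3 : Br uw vw * Br (w (ι i)) (w (ι j)) = 0 := by
      rw [← h2]
      simp only [hee, hgg] at h1
      linear_combination -h1
    rcases mul_eq_zero.mp h3 with h4 | h4
    · exact hw iu iv huv h4
    · exact hw (ι i) (ι j) (fun hh => hne (hιinj hh)) h4
  -- the three maps
  set SP : (Fin r → k) →ₗ[k] (Fin r → k) := (Smat r u.1 v.1 u.2 v.2).mulVecLin with hSP
  set SQ : (Fin r → k) →ₗ[k] (Fin r → k) :=
    (Smat r vw.2 (-vw.1) (-uw.2) uw.1).mulVecLin with hSQ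
  set H : (Fin r → k) →ₗ[k] (Fin r → k) := SQ ∘ₗ h ∘ₗ SP with hH
  have SP_Vv : ∀ s t : k, SP (Vv r s t) = Vv r (u.1 * s + v.1 * t) (u.2 * s + v.2 * t) := by
    intro s t
    rw [hSP, Matrix.mulVecLin_apply, Smat_mulVec r hr1]
  have SQ_Vv : ∀ s t : k, SQ (Vv r s t)
      = Vv r (vw.2 * s + -vw.1 * t) (-uw.2 * s + uw.1 * t) := by
    intro s t
    rw [hSQ, Matrix.mulVecLin_apply, Smat_mulVec r hr1]
  -- action of H on the marked points
  set ff : Fin r → k := fun i => d i ^ (r - 1) * c (ι i) * ee i ^ (r - 1) with hff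
  have HVlam : ∀ i : Fin r,
      H (Vv r 1 (lam i)) = ff i • Vv r 1 (mu i) := by
    intro i
    simp only [hff]
    have c1 : u.1 * 1 + v.1 * lam i = (z (ι i)).1 * d i := by
      have := congrArg Prod.fst (hdeq i)
      simp only [Prod.fst_add, Prod.smul_fst, smul_eq_mul] at this
      linear_combination this
    have c2 : u.2 * 1 + v.2 * lam i = (z (ι i)).2 * d i := by
      have := congrArg Prod.snd (hdeq i)
      simp only [Prod.snd_add, Prod.smul_snd, smul_eq_mul] at this
      linear_combination this
    have s1 : SP (Vv r 1 (lam i)) = Vv r ((z (ι i)).1 * d i) ((z (ι i)).2 * d i) := by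
      rw [SP_Vv, c1, c2]
    have s2 : Vv r ((z (ι i)).1 * d i) ((z (ι i)).2 * d i)
        = d i ^ (r - 1) • Vv r (z (ι i)).1 (z (ι i)).2 := by
      rw [mul_comm ((z (ι i)).1), mul_comm ((z (ι i)).2), Vv_smul]
    have c3 : vw.2 * (w (ι i)).1 + -vw.1 * (w (ι i)).2 = ee i := by
      simp only [hee, Br_def]; ring
    have c4 : -uw.2 * (w (ι i)).1 + uw.1 * (w (ι i)).2 = gg i := by
      simp only [hgg, Br_def]; ring
    have s3 : SQ (Vv r (w (ι i)).1 (w (ι i)).2) = ee i ^ (r - 1) • Vv r 1 (mu i) := by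
      rw [SQ_Vv, c3, c4]
      have e2 := Vv_smul r (ee i) 1 (mu i)
      rw [mul_one, ← hggmu i] at e2
      exact e2
    rw [hH, LinearMap.comp_apply, LinearMap.comp_apply, s1, s2, map_smul, hceq (ι i),
      map_smul, map_smul, s3, smul_smul, smul_smul]
  have hcu := hceq iu
  rw [← hu, ← huw] at hcu
  have hcv := hceq iv
  rw [← hv, ← hvw] at hcv
  set dP : k := Br u v with hdP
  have hdP0 : dP ≠ 0 := hz iu iv huv
  set dA : k := -Br vw uw with hdA
  have hdA0 : dA ≠ 0 := neg_ne_zero.mpr (hw iv iu (Ne.symm huv))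
  set dB : k := Br uw vw with hdB
  have hdB0 : dB ≠ 0 := hw iu iv huv
  have HV0 : H (Vv r 1 0) = (c iu * dA ^ (r - 1)) • Vv r 1 0 := by
    have s1 : SP (Vv r 1 0) = Vv r u.1 u.2 := by
      rw [SP_Vv, mul_one, mul_zero, mul_one, mul_zero, add_zero, add_zero]
    have c3 : vw.2 * uw.1 + -vw.1 * uw.2 = dA * 1 := by
      simp only [hdA, Br_def]; ring
    have c4 : -uw.2 * uw.1 + uw.1 * uw.2 = dA * 0 := by ring
    have s3 : SQ (Vv r uw.1 uw.2) = dA ^ (r - 1) • Vv r 1 0 := by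
      rw [SQ_Vv, c3, c4, Vv_smul]
    rw [hH, LinearMap.comp_apply, LinearMap.comp_apply, s1, hcu, map_smul, s3, smul_smul]
  have HV1 : H (Vv r 0 1) = (c iv * dB ^ (r - 1)) • Vv r 0 1 := by
    have s1 : SP (Vv r 0 1) = Vv r v.1 v.2 := by
      rw [SP_Vv, mul_one, mul_zero, mul_one, mul_zero, zero_add, zero_add]
    have c3 : vw.2 * vw.1 + -vw.1 * vw.2 = dB * 0 := by ring
    have c4 : -uw.2 * vw.1 + uw.1 * vw.2 = dB * 1 := by
      simp only [hdB, Br_def]; ring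
    have s3 : SQ (Vv r vw.1 vw.2) = dB ^ (r - 1) • Vv r 0 1 := by
      rw [SQ_Vv, c3, c4, Vv_smul]
    rw [hH, LinearMap.comp_apply, LinearMap.comp_apply, s1, hcv, map_smul, s3, smul_smul]
  -- coefficient comparison via Lagrange expansions
  have vecA : ∀ (l : Fin r → k), Function.Injective l →
      (∑ i, lagA l i • Vv r 1 (l i)) = Vv r 1 0 := by
    intro l hl
    funext m
    simp only [Finset.sum_apply, Pi.smul_apply, smul_eq_mul, Vv, one_pow, one_mul]
    exact factA l hl m
  have vecB : ∀ (l : Fin r → k), Function.Injective l →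
      (∑ i, lagB l i • Vv r 1 (l i)) = Vv r 0 1 := by
    intro l hl
    funext m
    simp only [Finset.sum_apply, Pi.smul_apply, smul_eq_mul, Vv, one_pow, one_mul, mul_one]
    exact factB hr1 l hl m
  have limu := vv_li r mu hmuinj
  rw [Fintype.linearIndependent_iff] at limu
  have keyA : ∀ i, lagA lam i * ff i = (c iu * dA ^ (r - 1)) * lagA mu i := by
    have e1 : ∑ i, (lagA lam i * ff i) • Vv r 1 (mu i)
        = (c iu * dA ^ (r - 1)) • Vv r 1 0 := by
      rw [← HV0, ← vecA lam hlaminj, map_sum]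
      refine Finset.sum_congr rfl fun i _ => ?_
      rw [map_smul, HVlam i, smul_smul]
    have e2 : ∑ i, ((c iu * dA ^ (r - 1)) * lagA mu i) • Vv r 1 (mu i)
        = (c iu * dA ^ (r - 1)) • Vv r 1 0 := by
      rw [← vecA mu hmuinj, Finset.smul_sum]
      refine Finset.sum_congr rfl fun i _ => ?_
      rw [smul_smul]
    have hsum : ∑ i, ((lagA lam i * ff i - (c iu * dA ^ (r - 1)) * lagA mu i) • Vv r 1 (mu i))
        = 0 := by
      simp only [sub_smul]
      rw [Finset.sum_sub_distrib, e1, e2, sub_self]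
    intro i
    exact sub_eq_zero.mp (limu _ hsum i)
  have keyB : ∀ i, lagB lam i * ff i = (c iv * dB ^ (r - 1)) * lagB mu i := by
    have e1 : ∑ i, (lagB lam i * ff i) • Vv r 1 (mu i)
        = (c iv * dB ^ (r - 1)) • Vv r 0 1 := by
      rw [← HV1, ← vecB lam hlaminj, map_sum]
      refine Finset.sum_congr rfl fun i _ => ?_
      rw [map_smul, HVlam i, smul_smul]
    have e2 : ∑ i, ((c iv * dB ^ (r - 1)) * lagB mu i) • Vv r 1 (mu i)
        = (c iv * dB ^ (r - 1)) • Vv r 0 1 := by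
      rw [← vecB mu hmuinj, Finset.smul_sum]
      refine Finset.sum_congr rfl fun i _ => ?_
      rw [smul_smul]
    have hsum : ∑ i, ((lagB lam i * ff i - (c iv * dB ^ (r - 1)) * lagB mu i) • Vv r 1 (mu i))
        = 0 := by
      simp only [sub_smul]
      rw [Finset.sum_sub_distrib, e1, e2, sub_self]
    intro i
    exact sub_eq_zero.mp (limu _ hsum i)
  -- nonvanishing of the Lagrange coefficients
  have hBl0 : ∀ i, lagB lam i ≠ 0 := by
    intro i
    rw [lagB_eq lam hlaminj i]
    rw [Finset.prod_ne_zero_iff]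
    intro j hj
    exact inv_ne_zero (sub_ne_zero.mpr fun hh => (Finset.mem_erase.mp hj).1 (hlaminj hh).symm)
  have hBm0 : ∀ i, lagB mu i ≠ 0 := by
    intro i
    rw [lagB_eq mu hmuinj i]
    rw [Finset.prod_ne_zero_iff]
    intro j hj
    exact inv_ne_zero (sub_ne_zero.mpr fun hh => (Finset.mem_erase.mp hj).1 (hmuinj hh).symm)
  have hAl0 : ∀ i, lagA lam i ≠ 0 := by
    intro i
    rw [lagA_eq lam hlaminj i]
    refine mul_ne_zero ?_ (hBl0 i)
    rw [Finset.prod_ne_zero_iff]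
    exact fun j _ => neg_ne_zero.mpr (hlam0 j)
  have hcA'0 : c iu * dA ^ (r - 1) ≠ 0 := mul_ne_zero (hc0 iu) (pow_ne_zero _ hdA0)
  have hcB'0 : c iv * dB ^ (r - 1) ≠ 0 := mul_ne_zero (hc0 iv) (pow_ne_zero _ hdB0)
  -- the star relation
  have star : ∀ i, (∏ j ∈ Finset.univ.erase i, -lam j) * (c iv * dB ^ (r - 1))
      = (c iu * dA ^ (r - 1)) * (∏ j ∈ Finset.univ.erase i, -mu j) := by
    intro i
    have kA := keyA i
    rw [lagA_eq lam hlaminj i, lagA_eq mu hmuinj i] at kA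
    have kB := keyB i
    apply mul_right_cancel₀ (hBm0 i)
    calc (∏ j ∈ Finset.univ.erase i, -lam j) * (c iv * dB ^ (r - 1)) * lagB mu i
        = (∏ j ∈ Finset.univ.erase i, -lam j) * (lagB lam i * ff i) := by
          linear_combination -(∏ j ∈ Finset.univ.erase i, -lam j) * kB
      _ = (c iu * dA ^ (r - 1)) * ((∏ j ∈ Finset.univ.erase i, -mu j) * lagB mu i) := by
          linear_combination kA
      _ = (c iu * dA ^ (r - 1)) * (∏ j ∈ Finset.univ.erase i, -mu j) * lagB mu i := by ring
  -- cross relation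
  have cross : ∀ i i' : Fin r, lam i' * mu i = lam i * mu i' := by
    intro i i'
    have hLM : (∏ j ∈ Finset.univ.erase i, -lam j) * (∏ j ∈ Finset.univ.erase i', -mu j)
        = (∏ j ∈ Finset.univ.erase i', -lam j) * (∏ j ∈ Finset.univ.erase i, -mu j) := by
      apply mul_left_cancel₀ hcB'0
      calc (c iv * dB ^ (r - 1))
            * ((∏ j ∈ Finset.univ.erase i, -lam j) * (∏ j ∈ Finset.univ.erase i', -mu j))
          = ((∏ j ∈ Finset.univ.erase i, -lam j) * (c iv * dB ^ (r - 1)))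
            * (∏ j ∈ Finset.univ.erase i', -mu j) := by ring
        _ = ((c iu * dA ^ (r - 1)) * (∏ j ∈ Finset.univ.erase i, -mu j))
            * (∏ j ∈ Finset.univ.erase i', -mu j) := by rw [star i]
        _ = ((c iu * dA ^ (r - 1)) * (∏ j ∈ Finset.univ.erase i', -mu j))
            * (∏ j ∈ Finset.univ.erase i, -mu j) := by ring
        _ = ((∏ j ∈ Finset.univ.erase i', -lam j) * (c iv * dB ^ (r - 1)))
            * (∏ j ∈ Finset.univ.erase i, -mu j) := by rw [star i']
        _ = (c iv * dB ^ (r - 1))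
            * ((∏ j ∈ Finset.univ.erase i', -lam j) * (∏ j ∈ Finset.univ.erase i, -mu j)) := by
            ring
    have e1 : ∀ i : Fin r, (-lam i) * ∏ j ∈ Finset.univ.erase i, -lam j = ∏ j, -lam j :=
      fun i => Finset.mul_prod_erase Finset.univ (fun j => -lam j) (Finset.mem_univ i)
    have e2 : ∀ i : Fin r, (-mu i) * ∏ j ∈ Finset.univ.erase i, -mu j = ∏ j, -mu j :=
      fun i => Finset.mul_prod_erase Finset.univ (fun j => -mu j) (Finset.mem_univ i)
    have hPL0 : (∏ j, -lam j) ≠ 0 := by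
      rw [Finset.prod_ne_zero_iff]; exact fun j _ => neg_ne_zero.mpr (hlam0 j)
    have hPM0 : (∏ j, -mu j) ≠ 0 := by
      rw [Finset.prod_ne_zero_iff]; exact fun j _ => neg_ne_zero.mpr (hmu0 j)
    apply mul_left_cancel₀ (mul_ne_zero hPL0 hPM0)
    calc (∏ j, -lam j) * (∏ j, -mu j) * (lam i' * mu i)
        = ((-lam i) * ∏ j ∈ Finset.univ.erase i, -lam j)
          * ((-mu i') * ∏ j ∈ Finset.univ.erase i', -mu j) * (lam i' * mu i) := by
          rw [e1 i, e2 i']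
      _ = ((∏ j ∈ Finset.univ.erase i, -lam j) * (∏ j ∈ Finset.univ.erase i', -mu j))
          * (lam i * lam i' * mu i * mu i') := by ring
      _ = ((∏ j ∈ Finset.univ.erase i', -lam j) * (∏ j ∈ Finset.univ.erase i, -mu j))
          * (lam i * lam i' * mu i * mu i') := by rw [hLM]
      _ = ((-lam i') * ∏ j ∈ Finset.univ.erase i', -lam j)
          * ((-mu i) * ∏ j ∈ Finset.univ.erase i, -mu j) * (lam i * mu i') := by ring
      _ = (∏ j, -lam j) * (∏ j, -mu j) * (lam i * mu i') := by rw [e1 i', e2 i]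
  -- all mu are a common multiple of lam
  set i0 : Fin r := ⟨0, by omega⟩ with hi0
  set alpha : k := mu i0 / lam i0 with halpha
  have halpha0 : alpha ≠ 0 := div_ne_zero (hmu0 i0) (hlam0 i0)
  have hmual : ∀ i, mu i = alpha * lam i := by
    intro i
    have hcr := cross i i0
    rw [halpha]
    field_simp [hlam0 i0]
    linear_combination hcr
  -- all the scaling factors agree
  have hAeq : ∀ i, lagA mu i = lagA lam i := by
    intro i
    rw [lagA_eq mu hmuinj i, lagA_eq lam hlaminj i, lagB_eq mu hmuinj i, lagB_eq lam hlaminj i,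
      ← Finset.prod_mul_distrib, ← Finset.prod_mul_distrib]
    refine Finset.prod_congr rfl fun j hj => ?_
    have hij : j ≠ i := (Finset.mem_erase.mp hj).1
    have hl : lam i - lam j ≠ 0 := sub_ne_zero.mpr fun hh => hij (hlaminj hh).symm
    rw [hmual i, hmual j, show alpha * lam i - alpha * lam j = alpha * (lam i - lam j) by ring,
      mul_inv, show -(alpha * lam j) * (alpha⁻¹ * (lam i - lam j)⁻¹)
        = -lam j * (lam i - lam j)⁻¹ * (alpha * alpha⁻¹) by ring,
      mul_inv_cancel₀ halpha0, mul_one]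
  have hffA : ∀ i, ff i = c iu * dA ^ (r - 1) := by
    intro i
    have kA := keyA i
    rw [hAeq i] at kA
    have : lagA lam i * ff i = lagA lam i * (c iu * dA ^ (r - 1)) := by linear_combination kA
    exact mul_left_cancel₀ (hAl0 i) this
  -- H is a scalar multiple of the diagonal map
  have HD : H = (c iu * dA ^ (r - 1)) • diagPow r alpha := by
    apply ext_on_vv hr1 hlaminj
    intro i
    rw [HVlam i, hffA i, LinearMap.smul_apply, diagPow_Vv, ← hmual i]
  -- inverse of SQ
  set SQi : (Fin r → k) →ₗ[k] (Fin r → k) := (Smat r uw.1 vw.1 uw.2 vw.2).mulVecLin with hSQi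
  have SQi_Vv : ∀ a b : k, SQi (Vv r a b) = Vv r (uw.1 * a + vw.1 * b) (uw.2 * a + vw.2 * b) := by
    intro a b
    rw [hSQi, Matrix.mulVecLin_apply, Smat_mulVec r hr1]
  have hQQ : SQi ∘ₗ SQ = (dB ^ (r - 1)) • (LinearMap.id : (Fin r → k) →ₗ[k] (Fin r → k)) := by
    have hlfree : Function.Injective (fun i : Fin r => ((Infinite.natEmbedding k) (i : ℕ))) :=
      fun a b hab => Fin.val_injective ((Infinite.natEmbedding k).injective hab)
    apply ext_on_vv hr1 hlfree
    intro i
    set x : k := (Infinite.natEmbedding k) (i : ℕ)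
    rw [LinearMap.comp_apply, SQ_Vv, SQi_Vv,
      show uw.1 * (vw.2 * 1 + -vw.1 * x) + vw.1 * (-uw.2 * 1 + uw.1 * x) = dB * 1 by
        simp only [hdB, Br_def]; ring,
      show uw.2 * (vw.2 * 1 + -vw.1 * x) + vw.2 * (-uw.2 * 1 + uw.1 * x) = dB * x by
        simp only [hdB, Br_def]; ring,
      Vv_smul]
    rw [LinearMap.smul_apply, LinearMap.id_apply]
  -- now handle an arbitrary point
  intro s t hst
  set s1 : k := v.2 * s + -v.1 * t with hs1
  set t1 : k := -u.2 * s + u.1 * t with ht1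
  have hst1 : ¬(s1 = 0 ∧ t1 = 0) := by
    rintro ⟨h1, h2⟩
    have e1 : dP * s = 0 := by
      have e : dP * s = u.1 * s1 + v.1 * t1 := by simp only [hs1, ht1, hdP, Br_def]; ring
      rw [e, h1, h2]; ring
    have e2 : dP * t = 0 := by
      have e : dP * t = u.2 * s1 + v.2 * t1 := by simp only [hs1, ht1, hdP, Br_def]; ring
      rw [e, h1, h2]; ring
    exact hst ⟨(mul_eq_zero.mp e1).resolve_left hdP0, (mul_eq_zero.mp e2).resolve_left hdP0⟩
  have hP : SP (Vv r s1 t1) = dP ^ (r - 1) • Vv r s t := by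
    rw [SP_Vv,
      show u.1 * s1 + v.1 * t1 = dP * s by simp only [hs1, ht1, hdP, Br_def]; ring,
      show u.2 * s1 + v.2 * t1 = dP * t by simp only [hs1, ht1, hdP, Br_def]; ring,
      Vv_smul]
  have e0 : H (Vv r s1 t1) = (c iu * dA ^ (r - 1)) • Vv r s1 (alpha * t1) := by
    rw [HD, LinearMap.smul_apply, diagPow_Vv]
  have e1 : H (Vv r s1 t1) = dP ^ (r - 1) • SQ (h (Vv r s t)) := by
    rw [hH, LinearMap.comp_apply, LinearMap.comp_apply, hP, map_smul, map_smul]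
  have e2 : dP ^ (r - 1) • SQ (h (Vv r s t)) = (c iu * dA ^ (r - 1)) • Vv r s1 (alpha * t1) := by
    rw [← e1, e0]
  have e3 := congrArg SQi e2
  rw [map_smul, map_smul] at e3
  have e4 : SQi (SQ (h (Vv r s t))) = dB ^ (r - 1) • h (Vv r s t) := by
    have := LinearMap.congr_fun hQQ (h (Vv r s t))
    rw [LinearMap.comp_apply] at this
    rw [this, LinearMap.smul_apply, LinearMap.id_apply]
  rw [e4, smul_smul, SQi_Vv] at e3
  -- the image point
  have hpq : ¬(uw.1 * s1 + vw.1 * (alpha * t1) = 0 ∧ uw.2 * s1 + vw.2 * (alpha * t1) = 0) := by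
    rintro ⟨h1, h2⟩
    have q1 : vw.2 * (uw.1 * s1 + vw.1 * (alpha * t1))
        + -vw.1 * (uw.2 * s1 + vw.2 * (alpha * t1)) = dB * s1 := by
      simp only [hdB, Br_def]; ring
    have q2 : -uw.2 * (uw.1 * s1 + vw.1 * (alpha * t1))
        + uw.1 * (uw.2 * s1 + vw.2 * (alpha * t1)) = dB * (alpha * t1) := by
      simp only [hdB, Br_def]; ring
    rw [h1, h2] at q1 q2
    simp only [mul_zero, add_zero, zero_add] at q1 q2
    apply hst1
    constructor
    · rcases mul_eq_zero.mp q1.symm with h | h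
      · exact absurd h hdB0
      · exact h
    · rcases mul_eq_zero.mp q2.symm with h | h
      · exact absurd h hdB0
      · rcases mul_eq_zero.mp h with h' | h'
        · exact absurd h' halpha0
        · exact h'
  refine ⟨(uw.1 * s1 + vw.1 * (alpha * t1), uw.2 * s1 + vw.2 * (alpha * t1)),
    (dP ^ (r - 1) * dB ^ (r - 1))⁻¹ * (c iu * dA ^ (r - 1)), ?_, ?_, ?_⟩
  · intro h0
    rw [Prod.ext_iff] at h0
    exact hpq ⟨h0.1, h0.2⟩
  · exact mul_ne_zero
      (inv_ne_zero (mul_ne_zero (pow_ne_zero _ hdP0) (pow_ne_zero _ hdB0))) hcA'0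
  · have hnz : dP ^ (r - 1) * dB ^ (r - 1) ≠ 0 :=
      mul_ne_zero (pow_ne_zero _ hdP0) (pow_ne_zero _ hdB0)
    calc h (Vv r s t)
        = (dP ^ (r - 1) * dB ^ (r - 1))⁻¹ • ((dP ^ (r - 1) * dB ^ (r - 1)) • h (Vv r s t)) := by
          rw [smul_smul, inv_mul_cancel₀ hnz, one_smul]
      _ = (dP ^ (r - 1) * dB ^ (r - 1))⁻¹ • ((c iu * dA ^ (r - 1))
            • Vv r (uw.1 * s1 + vw.1 * (alpha * t1)) (uw.2 * s1 + vw.2 * (alpha * t1))) := by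
          rw [e3]
      _ = ((dP ^ (r - 1) * dB ^ (r - 1))⁻¹ * (c iu * dA ^ (r - 1)))
            • Vv r (uw.1 * s1 + vw.1 * (alpha * t1)) (uw.2 * s1 + vw.2 * (alpha * t1)) := by
          rw [smul_smul]

lemma mem_stdRNC {k : Type*} [Field k] {r : ℕ} {P : ℙ k (Fin r → k)} :
    P ∈ stdRNC k r ↔ ∃ (z : k × k) (h : Vv r z.1 z.2 ≠ 0), P = Projectivization.mk k _ h := by
  constructor
  · rintro ⟨s, t, hne, rfl⟩
    exact ⟨(s, t), hne, rfl⟩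
  · rintro ⟨z, hne, rfl⟩
    exact ⟨z.1, z.2, hne, rfl⟩

lemma rnc_incl {k : Type*} [Field k] [Infinite k] {r : ℕ} (hr : 2 ≤ r)
    (g g' : (Fin r → k) ≃ₗ[k] (Fin r → k))
    (p : Fin (r + 2) → ℙ k (Fin r → k)) (hp : Function.Injective p)
    (hmem : ∀ i,
      p i ∈ (Projectivization.map (g : (Fin r → k) →ₗ[k] (Fin r → k)) g.injective) '' stdRNC k r
      ∧ p i ∈ (Projectivization.map (g' : (Fin r → k) →ₗ[k] (Fin r → k)) g'.injective)
          '' stdRNC k r) :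
    (Projectivization.map (g : (Fin r → k) →ₗ[k] (Fin r → k)) g.injective) '' stdRNC k r
      ⊆ (Projectivization.map (g' : (Fin r → k) →ₗ[k] (Fin r → k)) g'.injective)
          '' stdRNC k r := by
  classical
  -- extract parameters for the common points
  have hz' : ∀ i, ∃ (zz : k × k) (hne : Vv r zz.1 zz.2 ≠ 0),
      p i = Projectivization.map (g : (Fin r → k) →ₗ[k] (Fin r → k)) g.injective
        (Projectivization.mk k _ hne) := by
    intro i
    obtain ⟨P, hP, hPe⟩ := (hmem i).1
    obtain ⟨zz, hne, rfl⟩ := mem_stdRNC.mp hP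
    exact ⟨zz, hne, hPe.symm⟩
  have hw' : ∀ i, ∃ (zz : k × k) (hne : Vv r zz.1 zz.2 ≠ 0),
      p i = Projectivization.map (g' : (Fin r → k) →ₗ[k] (Fin r → k)) g'.injective
        (Projectivization.mk k _ hne) := by
    intro i
    obtain ⟨P, hP, hPe⟩ := (hmem i).2
    obtain ⟨zz, hne, rfl⟩ := mem_stdRNC.mp hP
    exact ⟨zz, hne, hPe.symm⟩
  choose z hzV hzp using hz'
  choose w hwV hwp using hw'
  have hz0 : ∀ i, z i ≠ 0 := by
    intro i h0
    apply hzV i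
    rw [h0]
    exact Vv_zero r hr
  have hw0 : ∀ i, w i ≠ 0 := by
    intro i h0
    apply hwV i
    rw [h0]
    exact Vv_zero r hr
  have hgV0 : ∀ i, (g : (Fin r → k) →ₗ[k] (Fin r → k)) (Vv r (z i).1 (z i).2) ≠ 0 := by
    intro i
    simp only [LinearEquiv.coe_coe, ne_eq, LinearEquiv.map_eq_zero_iff]
    exact hzV i
  have hgV0' : ∀ i, (g' : (Fin r → k) →ₗ[k] (Fin r → k)) (Vv r (w i).1 (w i).2) ≠ 0 := by
    intro i
    simp only [LinearEquiv.coe_coe, ne_eq, LinearEquiv.map_eq_zero_iff]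
    exact hwV i
  have hpz : ∀ i, p i = Projectivization.mk k
      ((g : (Fin r → k) →ₗ[k] (Fin r → k)) (Vv r (z i).1 (z i).2)) (hgV0 i) := by
    intro i
    rw [hzp i, Projectivization.map_mk]
  have hpw : ∀ i, p i = Projectivization.mk k
      ((g' : (Fin r → k) →ₗ[k] (Fin r → k)) (Vv r (w i).1 (w i).2)) (hgV0' i) := by
    intro i
    rw [hwp i, Projectivization.map_mk]
  -- pairwise independence of the parameters
  have hzbr : ∀ i j, i ≠ j → Br (z i) (z j) ≠ 0 := by
    intro i j hij hbr
    obtain ⟨dd, hdd0, hddeq⟩ := exists_smul_of_br_eq_zero (hz0 i) (hz0 j) hbr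
    have hVe : Vv r (z i).1 (z i).2 = dd ^ (r - 1) • Vv r (z j).1 (z j).2 := by
      rw [hddeq]
      simp only [Prod.smul_fst, Prod.smul_snd, smul_eq_mul]
      exact Vv_smul r dd _ _
    have hpij : p i = p j := by
      rw [hpz i, hpz j, Projectivization.mk_eq_mk_iff]
      refine ⟨Units.mk0 (dd ^ (r - 1)) (pow_ne_zero _ hdd0), ?_⟩
      rw [Units.smul_def, Units.val_mk0, ← map_smul, ← hVe]
    exact hp.ne hij hpij
  have hwbr : ∀ i j, i ≠ j → Br (w i) (w j) ≠ 0 := by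
    intro i j hij hbr
    obtain ⟨dd, hdd0, hddeq⟩ := exists_smul_of_br_eq_zero (hw0 i) (hw0 j) hbr
    have hVe : Vv r (w i).1 (w i).2 = dd ^ (r - 1) • Vv r (w j).1 (w j).2 := by
      rw [hddeq]
      simp only [Prod.smul_fst, Prod.smul_snd, smul_eq_mul]
      exact Vv_smul r dd _ _
    have hpij : p i = p j := by
      rw [hpw i, hpw j, Projectivization.mk_eq_mk_iff]
      refine ⟨Units.mk0 (dd ^ (r - 1)) (pow_ne_zero _ hdd0), ?_⟩
      rw [Units.smul_def, Units.val_mk0, ← map_smul, ← hVe]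
    exact hp.ne hij hpij
  -- the comparison map
  have hcore : ∀ i, ∃ c : k, c ≠ 0 ∧
      ((g'.symm : (Fin r → k) →ₗ[k] (Fin r → k)) ∘ₗ (g : (Fin r → k) →ₗ[k] (Fin r → k)))
        (Vv r (z i).1 (z i).2) = c • Vv r (w i).1 (w i).2 := by
    intro i
    have he : Projectivization.mk k
        ((g : (Fin r → k) →ₗ[k] (Fin r → k)) (Vv r (z i).1 (z i).2)) (hgV0 i)
        = Projectivization.mk k
        ((g' : (Fin r → k) →ₗ[k] (Fin r → k)) (Vv r (w i).1 (w i).2)) (hgV0' i) := by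
      rw [← hpz i, ← hpw i]
    rw [Projectivization.mk_eq_mk_iff] at he
    obtain ⟨a, ha⟩ := he
    refine ⟨(a : k), a.ne_zero, ?_⟩
    rw [LinearMap.comp_apply, ← ha, Units.smul_def, map_smul]
    simp only [LinearEquiv.coe_coe, LinearEquiv.symm_apply_apply]
  -- apply the core result
  rintro x ⟨P, hP, rfl⟩
  obtain ⟨zz, hne, rfl⟩ := mem_stdRNC.mp hP
  have hzz : ¬(zz.1 = 0 ∧ zz.2 = 0) := by
    rintro ⟨h1, h2⟩
    apply hne
    rw [h1, h2]
    exact Vv_zero r hr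
  obtain ⟨pq, cc, hpq0, hcc0, hcceq⟩ :=
    core hr ((g'.symm : (Fin r → k) →ₗ[k] (Fin r → k))
      ∘ₗ (g : (Fin r → k) →ₗ[k] (Fin r → k))) z w hzbr hwbr hcore zz.1 zz.2 hzz
  have hVpq : Vv r pq.1 pq.2 ≠ 0 :=
    Vv_ne_zero r hr fun hpair => hpq0 (Prod.ext hpair.1 hpair.2)
  have hkey : (g : (Fin r → k) →ₗ[k] (Fin r → k)) (Vv r zz.1 zz.2)
      = cc • (g' : (Fin r → k) →ₗ[k] (Fin r → k)) (Vv r pq.1 pq.2) := by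
    have h1 := congrArg (⇑(g' : (Fin r → k) →ₗ[k] (Fin r → k))) hcceq
    rw [map_smul, LinearMap.comp_apply] at h1
    simp only [LinearEquiv.coe_coe, LinearEquiv.apply_symm_apply] at h1
    exact h1
  refine ⟨Projectivization.mk k (Vv r pq.1 pq.2) hVpq, mem_stdRNC.mpr ⟨pq, hVpq, rfl⟩, ?_⟩
  rw [Projectivization.map_mk, Projectivization.map_mk, Projectivization.mk_eq_mk_iff]
  refine ⟨(Units.mk0 cc hcc0)⁻¹, ?_⟩
  rw [hkey, Units.smul_def]
  simp only [Units.val_inv_eq_inv_val, Units.val_mk0]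
  rw [smul_smul, inv_mul_cancel₀ hcc0, one_smul]


end AuxRNC

/-- Two rational normal curves in `ℙ^{r−1}` sharing `r+2` points in general linear
position are equal. -/
theorem stmt_16 (k : Type*) [Field k] [IsAlgClosed k] (r : ℕ) (hr : 2 ≤ r)
    (X X' : Set (ℙ k (Fin r → k))) (hX : IsRNC k r X) (hX' : IsRNC k r X')
    (p : Fin (r + 2) → ℙ k (Fin r → k)) (hp : Function.Injective p)
    (hmem : ∀ i, p i ∈ X ∧ p i ∈ X')
    (hgen : ∀ s : Finset (Fin (r + 2)), s.card = r →
      Projectivization.Independent fun i : s => p i) :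
    X = X' := by
  obtain ⟨g, rfl⟩ := hX
  obtain ⟨g', rfl⟩ := hX'
  apply Set.Subset.antisymm
  · exact rnc_incl hr g g' p hp hmem
  · exact rnc_incl hr g' g p hp fun i => ⟨(hmem i).2, (hmem i).1⟩
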